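/- Let Ω ⊆ ℝ² be open and connected, let f : Ω → ℝ³ be differentiable, and let ε₁, ε₂ : Ω → ℝ³ be differentiable maps each satisfying the homogeneous system ∂₁ε = 2ε × ∂₂f and ∂₂ε = −2ε × ∂₁f on Ω, where × is the cross product on ℝ³. Then the inner product ⟨ε₁, ε₂⟩ is constant on Ω; in particular the length |ε₁| is constant on Ω. -/

import Mathlib

open scoped RealInnerProductSpace ContDiff

/-- First partial derivative (in the first coordinate direction of `ℝ × ℝ`). -/
noncomputable def pd1 {E : Type*} [NormedAddCommGroup E] [NormedSpace ℝ E]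
    (f : ℝ × ℝ → E) : ℝ × ℝ → E := fun p => fderiv ℝ f p (1, 0)

/-- Second partial derivative (in the second coordinate direction of `ℝ × ℝ`). -/
noncomputable def pd2 {E : Type*} [NormedAddCommGroup E] [NormedSpace ℝ E]
    (f : ℝ × ℝ → E) : ℝ × ℝ → E := fun p => fderiv ℝ f p (0, 1)

/-- The standard cross product on `ℝ³`. -/
def cross3 (a b : EuclideanSpace ℝ (Fin 3)) : EuclideanSpace ℝ (Fin 3) := WithLp.toLp 2 (crossProduct a b)

lemma cross_inner_skew (a b w : EuclideanSpace ℝ (Fin 3)) :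
    ⟪a, cross3 b w⟫ + ⟪cross3 a w, b⟫ = 0 := by
  simp only [cross3, PiLp.inner_apply, RCLike.inner_apply, conj_trivial, cross_apply,
    Fin.sum_univ_three]
  simp [Matrix.cons_val_zero, Matrix.cons_val_one]
  ring

lemma aux_const (Ω : Set (ℝ × ℝ)) (hΩ : IsOpen Ω) (hconn : IsConnected Ω)
    (f : ℝ × ℝ → EuclideanSpace ℝ (Fin 3))
    (ε η : ℝ × ℝ → EuclideanSpace ℝ (Fin 3))
    (hε : DifferentiableOn ℝ ε Ω) (hη : DifferentiableOn ℝ η Ω)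
    (hε1 : ∀ p ∈ Ω, pd1 ε p = (2 : ℝ) • cross3 (ε p) (pd2 f p))
    (hε2 : ∀ p ∈ Ω, pd2 ε p = -((2 : ℝ) • cross3 (ε p) (pd1 f p)))
    (hη1 : ∀ p ∈ Ω, pd1 η p = (2 : ℝ) • cross3 (η p) (pd2 f p))
    (hη2 : ∀ p ∈ Ω, pd2 η p = -((2 : ℝ) • cross3 (η p) (pd1 f p))) :
    ∀ p ∈ Ω, ∀ q ∈ Ω, ⟪ε p, η p⟫ = ⟪ε q, η q⟫ := by
  set g : ℝ × ℝ → ℝ := fun p => ⟪ε p, η p⟫ with hg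
  -- derivative of g is zero on Ω
  have hfd : ∀ x ∈ Ω, fderiv ℝ g x = 0 := by
    intro x hx
    have hεx : HasFDerivAt ε (fderiv ℝ ε x) x :=
      (hε.differentiableAt (hΩ.mem_nhds hx)).hasFDerivAt
    have hηx : HasFDerivAt η (fderiv ℝ η x) x :=
      (hη.differentiableAt (hΩ.mem_nhds hx)).hasFDerivAt
    have hgx := (hεx.inner ℝ hηx)
    have hgf := hgx.fderiv
    have key : ∀ v : ℝ × ℝ, fderiv ℝ g x v = ⟪ε x, fderiv ℝ η x v⟫ + ⟪fderiv ℝ ε x v, η x⟫ := by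
      intro v
      rw [hgf]
      simp [fderivInnerCLM_apply]
    have k1 : fderiv ℝ g x (1, 0) = 0 := by
      rw [key]
      have e1 : fderiv ℝ ε x (1,0) = (2:ℝ) • cross3 (ε x) (pd2 f x) := hε1 x hx
      have e2 : fderiv ℝ η x (1,0) = (2:ℝ) • cross3 (η x) (pd2 f x) := hη1 x hx
      rw [e1, e2, real_inner_smul_right, real_inner_smul_left]
      have := cross_inner_skew (ε x) (η x) (pd2 f x)
      linarith
    have k2 : fderiv ℝ g x (0, 1) = 0 := by
      rw [key]
      have e1 : fderiv ℝ ε x (0,1) = -((2:ℝ) • cross3 (ε x) (pd1 f x)) := hε2 x hx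
      have e2 : fderiv ℝ η x (0,1) = -((2:ℝ) • cross3 (η x) (pd1 f x)) := hη2 x hx
      rw [e1, e2, inner_neg_right, inner_neg_left, real_inner_smul_right, real_inner_smul_left]
      have := cross_inner_skew (ε x) (η x) (pd1 f x)
      linarith
    refine ContinuousLinearMap.ext fun v => ?_
    have hv : v = v.1 • ((1:ℝ), (0:ℝ)) + v.2 • ((0:ℝ), (1:ℝ)) := by
      ext <;> simp
    calc (fderiv ℝ g x) v = (fderiv ℝ g x) (v.1 • ((1:ℝ),(0:ℝ)) + v.2 • ((0:ℝ),(1:ℝ))) := by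
          rw [← hv]
      _ = 0 := by rw [map_add, map_smul, map_smul, k1, k2]; simp
  -- g differentiable on Ω
  have hgdiff : DifferentiableOn ℝ g Ω := fun x hx =>
    (((hε.differentiableAt (hΩ.mem_nhds hx)).inner ℝ
      (hη.differentiableAt (hΩ.mem_nhds hx)))).differentiableWithinAt
  -- locally constant on Ω
  have hloc : ∀ x ∈ Ω, ∃ r > 0, Metric.ball x r ⊆ Ω ∧ ∀ y ∈ Metric.ball x r, g y = g x := by
    intro x hx
    obtain ⟨r, hr, hball⟩ := Metric.isOpen_iff.mp hΩ x hx
    refine ⟨r, hr, hball, fun y hy => ?_⟩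
    refine (convex_ball x r).is_const_of_fderivWithin_eq_zero
      (hgdiff.mono hball) (fun z hz => ?_) hy (Metric.mem_ball_self hr)
    rw [fderivWithin_of_isOpen Metric.isOpen_ball hz]
    exact hfd z (hball hz)
  -- clopen argument via IsLocallyConstant on the subtype
  intro p hp q hq
  have : PreconnectedSpace Ω := Subtype.preconnectedSpace hconn.isPreconnected
  have hlc : IsLocallyConstant (fun x : Ω => g x) := by
    rw [IsLocallyConstant.iff_exists_open]
    rintro ⟨x, hx⟩
    obtain ⟨r, hr, hball, hconst⟩ := hloc x hx
    refine ⟨Subtype.val ⁻¹' Metric.ball x r, isOpen_induced Metric.isOpen_ball,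
      Metric.mem_ball_self hr, ?_⟩
    rintro ⟨y, hy⟩ hmem
    exact hconst y hmem
  exact hlc.apply_eq_of_isPreconnected isPreconnected_univ (x := ⟨p, hp⟩) (y := ⟨q, hq⟩)
    trivial trivial

/-- Solutions of the homogeneous (spinning sphere) system
`∂₁ε = 2ε × ∂₂f`, `∂₂ε = −2ε × ∂₁f` on an open connected domain have constant pairwise
inner products; in particular constant length. -/
theorem homogeneous_solutions_constant_inner (Ω : Set (ℝ × ℝ)) (hΩ : IsOpen Ω)
    (hconn : IsConnected Ω)
    (f : ℝ × ℝ → EuclideanSpace ℝ (Fin 3)) (hf : DifferentiableOn ℝ f Ω)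
    (ε₁ ε₂ : ℝ × ℝ → EuclideanSpace ℝ (Fin 3))
    (hε₁ : DifferentiableOn ℝ ε₁ Ω) (hε₂ : DifferentiableOn ℝ ε₂ Ω)
    (hε₁1 : ∀ p ∈ Ω, pd1 ε₁ p = (2 : ℝ) • cross3 (ε₁ p) (pd2 f p))
    (hε₁2 : ∀ p ∈ Ω, pd2 ε₁ p = -((2 : ℝ) • cross3 (ε₁ p) (pd1 f p)))
    (hε₂1 : ∀ p ∈ Ω, pd1 ε₂ p = (2 : ℝ) • cross3 (ε₂ p) (pd2 f p))
    (hε₂2 : ∀ p ∈ Ω, pd2 ε₂ p = -((2 : ℝ) • cross3 (ε₂ p) (pd1 f p))) :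
    ∀ p ∈ Ω, ∀ q ∈ Ω, ⟪ε₁ p, ε₂ p⟫ = ⟪ε₁ q, ε₂ q⟫ ∧ ‖ε₁ p‖ = ‖ε₁ q‖ := by
  have h12 := aux_const Ω hΩ hconn f ε₁ ε₂ hε₁ hε₂ hε₁1 hε₁2 hε₂1 hε₂2
  have h11 := aux_const Ω hΩ hconn f ε₁ ε₁ hε₁ hε₁ hε₁1 hε₁2 hε₁1 hε₁2
  intro p hp q hq
  refine ⟨h12 p hp q hq, ?_⟩
  have := h11 p hp q hq
  rw [real_inner_self_eq_norm_mul_norm, real_inner_self_eq_norm_mul_norm] at this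
  nlinarith [norm_nonneg (ε₁ p), norm_nonneg (ε₁ q)]
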